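/- One step of the 1-D Rouy–Tourin dilation scheme u_i^{k+1} = u_i^k + τ·max{0, (u_{i+1}^k − u_i^k)/h, (u_{i−1}^k − u_i^k)/h} satisfies the maximum–minimum principle: if τ ≤ h, then min_j u_j^k ≤ u_i^{k+1} ≤ max_j u_j^k for all i. -/
import Mathlib


/-- One step of the 1-D Rouy–Tourin dilation scheme satisfies the
maximum–minimum principle when `τ ≤ h`. -/
theorem rouy_tourin_1d_max_min (u v : ℤ → ℝ)
    (hbdd : BddAbove (Set.range u)) (hbdd' : BddBelow (Set.range u))
    (h τ : ℝ) (hh : 0 < h) (hτ : 0 < τ) (hτh : τ ≤ h)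
    (hv : ∀ i, v i = u i + (τ / h) * max 0 (max (u (i + 1) - u i) (u (i - 1) - u i))) :
    ∀ i, sInf (Set.range u) ≤ v i ∧ v i ≤ sSup (Set.range u) := by
  intro i
  set M := max 0 (max (u (i + 1) - u i) (u (i - 1) - u i)) with hM
  have hM0 : 0 ≤ M := le_max_left _ _
  have hc0 : 0 ≤ τ / h := le_of_lt (div_pos hτ hh)
  have hc1 : τ / h ≤ 1 := (div_le_one hh).2 hτh
  have hle : ∀ j, u j ≤ sSup (Set.range u) :=
    fun j => le_csSup hbdd (Set.mem_range_self j)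
  have hge : ∀ j, sInf (Set.range u) ≤ u j :=
    fun j => csInf_le hbdd' (Set.mem_range_self j)
  constructor
  · rw [hv i]
    have : (0:ℝ) ≤ (τ / h) * M := mul_nonneg hc0 hM0
    linarith [hge i]
  · rw [hv i]
    have hMle : M ≤ max 0 (sSup (Set.range u) - u i) := by
      apply max_le (le_max_left _ _)
      apply max_le <;> exact le_max_of_le_right (by linarith [hle (i+1), hle (i-1)])
    have h2 : (τ / h) * M ≤ M := by
      nlinarith
    rcases le_or_gt (sSup (Set.range u) - u i) 0 with hc | hc
    · have : max 0 (sSup (Set.range u) - u i) = 0 := max_eq_left hc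
      rw [this] at hMle
      have : M = 0 := le_antisymm hMle hM0
      rw [← hM, this]; linarith [hle i]
    · have : max 0 (sSup (Set.range u) - u i) = sSup (Set.range u) - u i :=
        max_eq_right hc.le
      rw [this] at hMle
      linarith
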